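/- Let G be a finite group (more generally, a locally profinite group) and let ψ be a character of a subgroup N with values in roots of unity such that the induced representation Ind_N^G(ψ) is considered over ℂ. If Ind_N^G(ψ) is defined over ℚ and π is an irreducible subrepresentation appearing with multiplicity one, then π is defined over its field of rationality ℚ(π). -/

import Mathlib

open Matrix

noncomputable section

variable {G : Type*} [Group G] {n : ℕ}

/-- The Galois-conjugate representation `π^σ`, obtained by applying the field
automorphism `σ` of `ℂ` to all matrix entries. -/
def repConj (σ : ℂ ≃+* ℂ) (π : G →* GL (Fin n) ℂ) : G →* GL (Fin n) ℂ :=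
  (Matrix.GeneralLinearGroup.map (σ : ℂ →+* ℂ)).comp π

/-- Isomorphism (conjugacy) of matrix representations. -/
def RepEquiv (π₁ π₂ : G →* GL (Fin n) ℂ) : Prop :=
  ∃ M : GL (Fin n) ℂ, ∀ g, M * π₁ g * M⁻¹ = π₂ g

/-- The field of rationality `ℚ(π)`: the fixed field of the group of automorphisms
`σ` of `ℂ` such that `π^σ ≅ π`. -/
def fieldOfRationality (π : G →* GL (Fin n) ℂ) : Subfield ℂ where
  carrier := {z | ∀ σ : ℂ ≃+* ℂ, RepEquiv (repConj σ π) π → σ z = z}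
  zero_mem' := fun σ _ => map_zero σ
  one_mem' := fun σ _ => map_one σ
  add_mem' := fun {a b} ha hb σ h => by rw [map_add, ha σ h, hb σ h]
  mul_mem' := fun {a b} ha hb σ h => by rw [_root_.map_mul, ha σ h, hb σ h]
  neg_mem' := fun {a} ha σ h => by rw [map_neg, ha σ h]
  inv_mem' := fun a ha σ h => by rw [map_inv₀, ha σ h]

/-- `π` is defined over the subfield `K ⊆ ℂ`: it is isomorphic to the extension of
scalars of a `K`-rational representation. -/
def DefinedOver (π : G →* GL (Fin n) ℂ) (K : Subfield ℂ) : Prop :=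
  ∃ π₀ : G →* GL (Fin n) K,
    RepEquiv ((Matrix.GeneralLinearGroup.map (K.subtype)).comp π₀) π

/-- Irreducibility of a matrix representation. -/
def IsIrreducibleRep (π : G →* GL (Fin n) ℂ) : Prop :=
  ∀ W : Submodule ℂ (Fin n → ℂ),
    (∀ g, W.map ((π g : Matrix (Fin n) (Fin n) ℂ).mulVecLin) ≤ W) → W = ⊥ ∨ W = ⊤

/-- `ℚ{π}`: the `ℚ`-subalgebra of matrices spanned by the image of `π`
(as the image is multiplicatively closed, this is the `ℚ`-span of the image). -/
def Qspan (π : G →* GL (Fin n) ℂ) : Subalgebra ℚ (Matrix (Fin n) (Fin n) ℂ) :=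
  Algebra.adjoin ℚ {M | ∃ g, (π g : Matrix (Fin n) (Fin n) ℂ) = M}


/-- The space of `G`-intertwiners from `π` to `ρ`. -/
def intertwiners {G : Type*} [Group G] {n N : ℕ}
    (π : G →* GL (Fin n) ℂ) (ρ : G →* GL (Fin N) ℂ) :
    Submodule ℂ ((Fin n → ℂ) →ₗ[ℂ] (Fin N → ℂ)) where
  carrier := {f | ∀ g, f.comp ((π g : Matrix (Fin n) (Fin n) ℂ).mulVecLin)
      = ((ρ g : Matrix (Fin N) (Fin N) ℂ).mulVecLin).comp f}
  add_mem' := fun {f₁ f₂} h₁ h₂ g => by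
    rw [LinearMap.add_comp, LinearMap.comp_add, h₁ g, h₂ g]
  zero_mem' := fun g => by rw [LinearMap.zero_comp, LinearMap.comp_zero]
  smul_mem' := fun c f hf g => by rw [LinearMap.smul_comp, LinearMap.comp_smul, hf g]

/-- The space of the representation of `G` induced from a character `ψ` of a
subgroup `H`: functions `f : G → ℂ` with `f (h * g) = ψ h * f g`, on which `G` acts
by right translation. -/
def inducedSpace {G : Type*} [Group G] (H : Subgroup G) (ψ : H →* ℂˣ) :
    Submodule ℂ (G → ℂ) where
  carrier := {f | ∀ (x : H) (g : G), f ((x : G) * g) = (ψ x : ℂ) * f g}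
  add_mem' := fun {f₁ f₂} h₁ h₂ x g => by
    simp only [Pi.add_apply, h₁ x g, h₂ x g]; ring
  zero_mem' := fun x g => by simp
  smul_mem' := fun c f hf x g => by
    simp only [Pi.smul_apply, smul_eq_mul, hf x g]; ring

/-- Right translation action of `G` on the induced space. -/
def indAct {G : Type*} [Group G] (H : Subgroup G) (ψ : H →* ℂˣ) (h : G) :
    inducedSpace H ψ →ₗ[ℂ] inducedSpace H ψ where
  toFun f := ⟨fun g => (f : G → ℂ) (g * h),
    fun x g => by simpa [mul_assoc] using f.2 x (g * h)⟩
  map_add' f₁ f₂ := by apply Subtype.ext; rfl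
  map_smul' c f := by apply Subtype.ext; rfl


lemma sigma_fix_bot (σ : ℂ ≃+* ℂ) {z : ℂ} (hz : z ∈ (⊥ : Subfield ℂ)) : σ z = z := by
  have hle : (⊥ : Subfield ℂ) ≤ RingHom.eqLocusField (σ : ℂ →+* ℂ) (RingHom.id ℂ) := bot_le
  exact hle hz

lemma mulVecLin_inj {a b : ℕ} {X Y : Matrix (Fin a) (Fin b) ℂ}
    (h : X.mulVecLin = Y.mulVecLin) : X = Y := by
  exact Matrix.toLin'.injective h

lemma exists_submatrix_isUnit {m n : ℕ} (A : Matrix (Fin m) (Fin n) ℂ)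
    (hA : Function.Injective A.mulVecLin) :
    ∃ f : Fin n → Fin m, IsUnit (A.submatrix f id) := by
  classical
  have hrank : Module.finrank ℂ (Submodule.span ℂ (Set.range A)) = n := by
    have h1 : A.rank = n := by
      rw [Matrix.rank, LinearMap.finrank_range_of_inj hA, Module.finrank_fin_fun]
    exact (A.rank_eq_finrank_span_row).symm.trans h1
  have hspan : Submodule.span ℂ (Set.range A) = ⊤ := by
    apply Submodule.eq_top_of_finrank_eq
    rw [hrank, Module.finrank_fin_fun]
  obtain ⟨b, hbsub, hbspan, hbli⟩ := exists_linearIndependent ℂ (Set.range A)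
  rw [hspan] at hbspan
  have hb : Module.Basis b ℂ (Fin n → ℂ) := Module.Basis.mk hbli (by rw [Subtype.range_coe]; exact hbspan.ge)
  haveI : Fintype b := FiniteDimensional.fintypeBasisIndex hb
  have hcard : Fintype.card b = n := by
    have := Module.finrank_eq_card_basis hb
    rw [Module.finrank_fin_fun] at this
    omega
  let e : Fin n ≃ b := (Fintype.equivFinOfCardEq hcard).symm
  have hmem : ∀ i : Fin n, ((e i : Fin n → ℂ)) ∈ Set.range A := fun i => hbsub (e i).2
  let f : Fin n → Fin m := fun i => (hmem i).choose
  have hf : ∀ i, A (f i) = (e i : Fin n → ℂ) := fun i => (hmem i).choose_spec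
  refine ⟨f, ?_⟩
  rw [← Matrix.linearIndependent_rows_iff_isUnit]
  have : (fun i => A.submatrix f id i) = fun i => ((e i : Fin n → ℂ)) := by
    funext i; ext j; simp [Matrix.submatrix_apply, ← hf i]
  show LinearIndependent ℂ (fun i => A.submatrix f id i)
  rw [this]
  exact hbli.comp (fun i => e i) e.injective

lemma mul_cancel_left_of_eq_one {k l : ℕ} {u v : Matrix (Fin k) (Fin k) ℂ}
    (hvu : v * u = 1) (X : Matrix (Fin k) (Fin l) ℂ) : v * (u * X) = X := by
  rw [← Matrix.mul_assoc, hvu, Matrix.one_mul]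

lemma sandwich {k : ℕ} {u v X : Matrix (Fin k) (Fin k) ℂ}
    (hvu : v * u = 1) : v * (u * X * v) * u = X := by
  rw [Matrix.mul_assoc u X v, ← Matrix.mul_assoc v u, hvu, Matrix.one_mul,
    Matrix.mul_assoc, hvu, Matrix.mul_one]

/-- If the induction `Ind_H^G ψ` of a root-of-unity-valued character
`ψ` of a subgroup `H ≤ G` (realized as a matrix representation `ρ`) is defined over
`ℚ`, and `π` is an irreducible representation appearing in it with multiplicity one,
then `π` is defined over its field of rationality `ℚ(π)`. -/
theorem definedOver_field_of_rationality_of_mult_one_in_induced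
    {G : Type*} [Group G] (H : Subgroup G) (ψ : H →* ℂˣ)
    (hroots : ∀ x : H, ∃ k : ℕ, 0 < k ∧ ψ x ^ k = 1)
    {m : ℕ} (ρ : G →* GL (Fin m) ℂ)
    (hInd : ∃ e : (Fin m → ℂ) ≃ₗ[ℂ] inducedSpace H ψ,
      ∀ (h : G) (x : Fin m → ℂ),
        e ((ρ h : Matrix (Fin m) (Fin m) ℂ).mulVecLin x) = indAct H ψ h (e x))
    (hQ : DefinedOver ρ ⊥)
    {n : ℕ} (π : G →* GL (Fin n) ℂ) (hirr : IsIrreducibleRep π)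
    (hmult : Module.finrank ℂ (intertwiners π ρ) = 1) :
    DefinedOver π (fieldOfRationality π) := by
  classical
  obtain ⟨ρ₀, M₀, hM₀⟩ := hQ
  set K := fieldOfRationality π with hKdef
  set m₀ : Matrix (Fin m) (Fin m) ℂ := (M₀ : Matrix (Fin m) (Fin m) ℂ) with hm₀def
  set m₀' : Matrix (Fin m) (Fin m) ℂ := ((M₀⁻¹ : GL (Fin m) ℂ) : Matrix (Fin m) (Fin m) ℂ)
    with hm₀'def
  have hm₀ : m₀ * m₀' = 1 := by
    rw [hm₀def, hm₀'def, ← Units.val_mul, mul_inv_cancel, Units.val_one]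
  have hm₀' : m₀' * m₀ = 1 := by
    rw [hm₀def, hm₀'def, ← Units.val_mul, inv_mul_cancel, Units.val_one]
  set ρ' : G → Matrix (Fin m) (Fin m) ℂ :=
    fun g => ((ρ₀ g : Matrix (Fin m) (Fin m) (⊥ : Subfield ℂ)).map ((⊥ : Subfield ℂ).subtype))
    with hρ'def
  have hρ'fix : ∀ (σ : ℂ ≃+* ℂ) (g : G), (ρ' g).map (σ : ℂ →+* ℂ) = ρ' g := by
    intro σ g; ext i j
    exact sigma_fix_bot σ ((ρ₀ g : Matrix (Fin m) (Fin m) (⊥ : Subfield ℂ)) i j).2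
  have hρeq : ∀ g, (ρ g : Matrix (Fin m) (Fin m) ℂ) = m₀ * ρ' g * m₀' := by
    intro g
    have h := congrArg Units.val (hM₀ g)
    rw [Units.val_mul, Units.val_mul] at h
    have hcoe : ((((Matrix.GeneralLinearGroup.map ((⊥ : Subfield ℂ).subtype)).comp ρ₀) g :
        GL (Fin m) ℂ) : Matrix (Fin m) (Fin m) ℂ) = ρ' g := by
      ext i j
      simp [Matrix.GeneralLinearGroup.map_apply, hρ'def, Matrix.map_apply]
    rw [hcoe] at h
    exact h.symm
  have hcomm : ∀ g, m₀ * ρ' g = (ρ g : Matrix (Fin m) (Fin m) ℂ) * m₀ := by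
    intro g
    rw [hρeq g, Matrix.mul_assoc, Matrix.mul_assoc, hm₀', Matrix.mul_one]
  have hswap : ∀ g, m₀' * (ρ g : Matrix (Fin m) (Fin m) ℂ) = ρ' g * m₀' := by
    intro g
    rw [hρeq g, ← Matrix.mul_assoc, ← Matrix.mul_assoc, hm₀', Matrix.one_mul]
  -- matrix-level membership in intertwiners
  have mem_itw : ∀ B : Matrix (Fin m) (Fin n) ℂ,
      (B.mulVecLin ∈ intertwiners π ρ ↔
        ∀ g, B * (π g : Matrix (Fin n) (Fin n) ℂ) = (ρ g : Matrix (Fin m) (Fin m) ℂ) * B) := by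
    intro B
    constructor
    · intro h g
      apply mulVecLin_inj
      rw [Matrix.mulVecLin_mul, Matrix.mulVecLin_mul]
      exact h g
    · intro h g
      show B.mulVecLin.comp _ = LinearMap.comp _ _
      rw [← Matrix.mulVecLin_mul, ← Matrix.mulVecLin_mul, h g]
  haveI : FiniteDimensional ℂ (intertwiners π ρ) := inferInstance
  -- a nonzero intertwiner
  have hnt : ∃ T : intertwiners π ρ, T ≠ 0 := by
    have hpos : 0 < Module.finrank ℂ (intertwiners π ρ) := by rw [hmult]; norm_num
    have : Nontrivial (intertwiners π ρ) := Module.nontrivial_of_finrank_pos hpos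
    exact exists_ne 0
  obtain ⟨T, hT0⟩ := hnt
  set Tm : Matrix (Fin m) (Fin n) ℂ := LinearMap.toMatrix' (T : (Fin n → ℂ) →ₗ[ℂ] (Fin m → ℂ))
    with hTmdef
  have hTv : Tm.mulVecLin = (T : (Fin n → ℂ) →ₗ[ℂ] (Fin m → ℂ)) :=
    Matrix.toLin'_toMatrix' _
  have hTitw : ∀ g, Tm * (π g : Matrix (Fin n) (Fin n) ℂ)
      = (ρ g : Matrix (Fin m) (Fin m) ℂ) * Tm :=
    (mem_itw Tm).1 (by rw [hTv]; exact T.2)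
  set A : Matrix (Fin m) (Fin n) ℂ := m₀' * Tm with hAdef
  have hTmA : m₀ * A = Tm := by
    rw [hAdef, ← Matrix.mul_assoc, hm₀, Matrix.one_mul]
  have hA : ∀ g, A * (π g : Matrix (Fin n) (Fin n) ℂ) = ρ' g * A := by
    intro g
    rw [hAdef, Matrix.mul_assoc, hTitw g, ← Matrix.mul_assoc, hswap g, Matrix.mul_assoc]
  have hA0 : A ≠ 0 := by
    intro h
    apply hT0
    have hTm0 : Tm = 0 := by rw [← hTmA, h, Matrix.mul_zero]
    have : (T : (Fin n → ℂ) →ₗ[ℂ] (Fin m → ℂ)) = 0 := by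
      rw [← hTv, hTm0, Matrix.mulVecLin_zero]
    exact Subtype.ext this
  have hAinj : Function.Injective A.mulVecLin := by
    have hker := hirr (LinearMap.ker A.mulVecLin) ?_
    · rcases hker with hbot | htop
      · exact LinearMap.ker_eq_bot.mp hbot
      · exfalso
        apply hA0
        have hz : A.mulVecLin = 0 := LinearMap.ker_eq_top.mp htop
        apply mulVecLin_inj
        rw [hz, Matrix.mulVecLin_zero]
    · intro g x hx
      rw [Submodule.mem_map] at hx
      obtain ⟨v, hv, rfl⟩ := hx
      rw [LinearMap.mem_ker] at hv ⊢
      rw [← LinearMap.comp_apply, ← Matrix.mulVecLin_mul, hA g, Matrix.mulVecLin_mul,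
        LinearMap.comp_apply, hv, map_zero]
  obtain ⟨f, hRu⟩ := exists_submatrix_isUnit A hAinj
  set R : Matrix (Fin n) (Fin n) ℂ := A.submatrix f id with hRdef
  have hRdet : IsUnit R.det := (Matrix.isUnit_iff_isUnit_det R).mp hRu
  have hRR' : R * R⁻¹ = 1 := Matrix.mul_nonsing_inv R hRdet
  have hR'R : R⁻¹ * R = 1 := Matrix.nonsing_inv_mul R hRdet
  -- multiplicity one at the matrix level
  have hmultone : ∀ B : Matrix (Fin m) (Fin n) ℂ,
      (∀ g, B * (π g : Matrix (Fin n) (Fin n) ℂ) = ρ' g * B) → ∃ c : ℂ, B = c • A := by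
    intro B hB
    have hmemB : (m₀ * B).mulVecLin ∈ intertwiners π ρ := by
      apply (mem_itw _).2
      intro g
      rw [Matrix.mul_assoc, hB g, ← Matrix.mul_assoc, hcomm g, Matrix.mul_assoc]
    obtain ⟨c, hc⟩ := exists_smul_eq_of_finrank_eq_one hmult hT0
      (⟨(m₀ * B).mulVecLin, hmemB⟩ : intertwiners π ρ)
    refine ⟨c, ?_⟩
    have hval2 : c • (T : (Fin n → ℂ) →ₗ[ℂ] (Fin m → ℂ)) = (m₀ * B).mulVecLin :=
      congrArg Subtype.val hc
    have hval' : (c • Tm).mulVecLin = (m₀ * B).mulVecLin := by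
      have hsm : (c • Tm).mulVecLin = c • Tm.mulVecLin := map_smul Matrix.toLin' c Tm
      rw [hsm, hTv]; exact hval2
    have hMB : m₀ * B = c • Tm := (mulVecLin_inj hval').symm
    have hMB2 : m₀ * B = m₀ * (c • A) := by
      rw [hMB, ← hTmA, Matrix.mul_smul]
    calc B = m₀' * (m₀ * B) := (mul_cancel_left_of_eq_one hm₀' B).symm
    _ = m₀' * (m₀ * (c • A)) := by rw [hMB2]
    _ = c • A := mul_cancel_left_of_eq_one hm₀' _
  -- the conjugated representation matrices
  set πm : G → Matrix (Fin n) (Fin n) ℂ :=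
    fun g => R * (π g : Matrix (Fin n) (Fin n) ℂ) * R⁻¹ with hπmdef
  have h1 : ∀ g, πm g * R = R * (π g : Matrix (Fin n) (Fin n) ℂ) := by
    intro g
    show R * (π g : Matrix (Fin n) (Fin n) ℂ) * R⁻¹ * R = R * (π g : Matrix (Fin n) (Fin n) ℂ)
    rw [Matrix.mul_assoc, hR'R, Matrix.mul_one]
  -- entries of πm are fixed by every relevant σ
  have hfix : ∀ (g : G) (σ : ℂ ≃+* ℂ), RepEquiv (repConj σ π) π →
      (πm g).map (σ : ℂ →+* ℂ) = πm g := by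
    rintro g σ ⟨Mσ, hMσ⟩
    set mσ : Matrix (Fin n) (Fin n) ℂ := (Mσ : Matrix (Fin n) (Fin n) ℂ) with hmσdef
    set mσ' : Matrix (Fin n) (Fin n) ℂ := ((Mσ⁻¹ : GL (Fin n) ℂ) : Matrix (Fin n) (Fin n) ℂ)
      with hmσ'def
    have hmσ : mσ * mσ' = 1 := by
      rw [hmσdef, hmσ'def, ← Units.val_mul, mul_inv_cancel, Units.val_one]
    have hmσ' : mσ' * mσ = 1 := by
      rw [hmσdef, hmσ'def, ← Units.val_mul, inv_mul_cancel, Units.val_one]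
    have hconj : ∀ h : G,
        mσ * ((π h : Matrix (Fin n) (Fin n) ℂ).map (σ : ℂ →+* ℂ)) * mσ'
          = (π h : Matrix (Fin n) (Fin n) ℂ) := by
      intro h
      have hh := congrArg Units.val (hMσ h)
      rw [Units.val_mul, Units.val_mul] at hh
      have hcoe : ((repConj σ π h : GL (Fin n) ℂ) : Matrix (Fin n) (Fin n) ℂ)
          = (π h : Matrix (Fin n) (Fin n) ℂ).map (σ : ℂ →+* ℂ) := by
        ext i j
        simp [repConj, Matrix.GeneralLinearGroup.map_apply, Matrix.map_apply]
      rw [hcoe] at hh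
      exact hh
    have hπσ : ∀ h : G, mσ' * (π h : Matrix (Fin n) (Fin n) ℂ) * mσ
        = (π h : Matrix (Fin n) (Fin n) ℂ).map (σ : ℂ →+* ℂ) := by
      intro h
      conv_lhs => rw [← hconj h]
      exact sandwich hmσ'
    have hAσ : ∀ h : G, (A.map (σ : ℂ →+* ℂ)) *
        ((π h : Matrix (Fin n) (Fin n) ℂ).map (σ : ℂ →+* ℂ)) = ρ' h * (A.map (σ : ℂ →+* ℂ)) := by
      intro h
      have hh := congrArg (fun X : Matrix (Fin m) (Fin n) ℂ => X.map (σ : ℂ →+* ℂ)) (hA h)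
      simp only [Matrix.map_mul] at hh
      rw [hρ'fix σ h] at hh
      exact hh
    have hBitw : ∀ h : G, (A.map (σ : ℂ →+* ℂ) * mσ') * (π h : Matrix (Fin n) (Fin n) ℂ)
        = ρ' h * (A.map (σ : ℂ →+* ℂ) * mσ') := by
      intro h
      conv_lhs => rw [← hconj h]
      rw [Matrix.mul_assoc (A.map (σ : ℂ →+* ℂ)) mσ',
        Matrix.mul_assoc mσ _ mσ',
        mul_cancel_left_of_eq_one hmσ', ← Matrix.mul_assoc, ← Matrix.mul_assoc,
        hAσ h, Matrix.mul_assoc]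
    obtain ⟨c, hc⟩ := hmultone (A.map (σ : ℂ →+* ℂ) * mσ') hBitw
    have hc0 : c ≠ 0 := by
      intro h0
      rw [h0, zero_smul] at hc
      have hAσ0 : A.map (σ : ℂ →+* ℂ) = 0 := by
        have h2 := congrArg (fun X : Matrix (Fin m) (Fin n) ℂ => X * mσ) hc
        simp only [Matrix.zero_mul, Matrix.mul_assoc, hmσ', Matrix.mul_one] at h2
        exact h2
      apply hA0
      ext i j
      have h3 := congrFun (congrFun hAσ0 i) j
      simp only [Matrix.map_apply, Matrix.zero_apply] at h3 ⊢
      exact (map_eq_zero_iff (σ : ℂ →+* ℂ) σ.injective).mp h3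
    have hAσ_eq : A.map (σ : ℂ →+* ℂ) = A * (c • mσ) := by
      have hh := congrArg (fun X : Matrix (Fin m) (Fin n) ℂ => X * mσ) hc
      simp only [Matrix.mul_assoc, hmσ', Matrix.mul_one] at hh
      rw [hh, Matrix.smul_mul, Matrix.mul_smul]
    have hmσu : IsUnit ((c • mσ : Matrix (Fin n) (Fin n) ℂ)).det := by
      rw [Matrix.det_smul, Fintype.card_fin]
      exact (IsUnit.pow n (Ne.isUnit hc0)).mul ((Matrix.isUnit_iff_isUnit_det mσ).mp Mσ.isUnit)
    have hRσ : R.map (σ : ℂ →+* ℂ) = R * (c • mσ) := by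
      have hsub : R.map (σ : ℂ →+* ℂ) = (A.map (σ : ℂ →+* ℂ)).submatrix f id := by
        ext i j; simp [Matrix.map_apply, Matrix.submatrix_apply, hRdef]
      have hsub2 : (A * (c • mσ)).submatrix f id = A.submatrix f id * (c • mσ) := by
        ext i j
        simp only [Matrix.mul_apply, Matrix.submatrix_apply, Matrix.smul_apply, smul_eq_mul,
          id_eq]
      rw [hsub, hAσ_eq, hsub2, hRdef]
    set D : Matrix (Fin n) (Fin n) ℂ := R * (c • mσ) with hDdef
    have hDdet : IsUnit D.det := by
      rw [hDdef, Matrix.det_mul]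
      exact hRdet.mul hmσu
    have hmain : (πm g).map (σ : ℂ →+* ℂ) * D = πm g * D := by
      have h2 := congrArg (fun X : Matrix (Fin n) (Fin n) ℂ => X.map (σ : ℂ →+* ℂ)) (h1 g)
      simp only [Matrix.map_mul] at h2
      rw [hRσ] at h2
      -- h2 : (πm g).map σ * D = D * (π g).map σ
      rw [h2]
      rw [← hπσ g, hDdef]
      show R * (c • mσ) * (mσ' * (π g : Matrix (Fin n) (Fin n) ℂ) * mσ)
        = R * (π g : Matrix (Fin n) (Fin n) ℂ) * R⁻¹ * (R * (c • mσ))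
      simp only [Matrix.mul_smul, Matrix.smul_mul, Matrix.mul_assoc,
        mul_cancel_left_of_eq_one hmσ, mul_cancel_left_of_eq_one hmσ',
        mul_cancel_left_of_eq_one hR'R, mul_cancel_left_of_eq_one hRR']
    calc (πm g).map (σ : ℂ →+* ℂ) = (πm g).map (σ : ℂ →+* ℂ) * D * D⁻¹ :=
      (Matrix.mul_nonsing_inv_cancel_right _ _ hDdet).symm
    _ = πm g * D * D⁻¹ := by rw [hmain]
    _ = πm g := Matrix.mul_nonsing_inv_cancel_right _ _ hDdet
  have hmem : ∀ (g : G) (i j : Fin n), πm g i j ∈ K := by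
    intro g i j σ hσ
    have h := hfix g σ hσ
    calc (σ : ℂ →+* ℂ) (πm g i j) = ((πm g).map (σ : ℂ →+* ℂ)) i j := rfl
    _ = πm g i j := by rw [h]
  have hπm_mul : ∀ g h : G, πm (g * h) = πm g * πm h := by
    intro g h
    show R * (π (g * h) : Matrix (Fin n) (Fin n) ℂ) * R⁻¹
      = R * (π g : Matrix (Fin n) (Fin n) ℂ) * R⁻¹ * (R * (π h : Matrix (Fin n) (Fin n) ℂ) * R⁻¹)
    rw [map_mul π, Units.val_mul]
    simp only [Matrix.mul_assoc, mul_cancel_left_of_eq_one hR'R]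
  have hπm_one : πm 1 = 1 := by
    show R * (π 1 : Matrix (Fin n) (Fin n) ℂ) * R⁻¹ = 1
    rw [map_one π, Units.val_one, Matrix.mul_one, hRR']
  set mat₀ : G → Matrix (Fin n) (Fin n) K :=
    fun g => Matrix.of (fun i j => (⟨πm g i j, hmem g i j⟩ : K)) with hmat₀def
  have hmat₀ : ∀ g, (mat₀ g).map K.subtype = πm g := by
    intro g; ext i j; rfl
  have hinj : ∀ X Y : Matrix (Fin n) (Fin n) K, X.map K.subtype = Y.map K.subtype → X = Y := by
    intro X Y h
    ext i j
    have h2 := congrFun (congrFun h i) j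
    simp only [Matrix.map_apply] at h2
    exact h2
  have hmat₀_mul : ∀ g h : G, mat₀ (g * h) = mat₀ g * mat₀ h := by
    intro g h
    apply hinj
    rw [Matrix.map_mul, hmat₀, hmat₀, hmat₀, hπm_mul]
  have hmat₀_one : mat₀ 1 = 1 := by
    apply hinj
    rw [hmat₀, hπm_one]
    ext i j
    by_cases h : i = j <;> simp [Matrix.map_apply, Matrix.one_apply, h]
  let π₀ : G →* GL (Fin n) K :=
    { toFun := fun g => ⟨mat₀ g, mat₀ g⁻¹,
        by rw [← hmat₀_mul, mul_inv_cancel, hmat₀_one],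
        by rw [← hmat₀_mul, inv_mul_cancel, hmat₀_one]⟩
      map_one' := Units.ext hmat₀_one
      map_mul' := fun g h => Units.ext (hmat₀_mul g h) }
  refine ⟨π₀, hRu.unit⁻¹, fun g => ?_⟩
  apply Units.ext
  rw [Units.val_mul, Units.val_mul]
  have hcoe : (((Matrix.GeneralLinearGroup.map K.subtype).comp π₀) g : Matrix (Fin n) (Fin n) ℂ)
      = πm g := by
    ext i j
    simp only [MonoidHom.comp_apply, Matrix.GeneralLinearGroup.map_apply]
    rfl
  rw [hcoe]
  have hval1 : ((hRu.unit⁻¹ : GL (Fin n) ℂ) : Matrix (Fin n) (Fin n) ℂ) = R⁻¹ := by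
    rw [Matrix.coe_units_inv, hRu.unit_spec]
  have hval2 : (((hRu.unit⁻¹)⁻¹ : GL (Fin n) ℂ) : Matrix (Fin n) (Fin n) ℂ) = R := by
    rw [inv_inv, hRu.unit_spec]
  rw [hval1, hval2, Matrix.mul_assoc, h1 g, mul_cancel_left_of_eq_one hR'R]

end
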